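/- Under Assumption 2(ii)–(iii), the augmented pseudogradient is θ-Lipschitz continuous: for all stacked estimate vectors 𝐱 = (x¹,…,x^N) and 𝐲 = (y¹,…,y^N) in (ℝ^N)^N one has ‖𝐅(𝐱) − 𝐅(𝐲)‖ ≤ θ‖𝐱 − 𝐲‖, where θ = max_{i∈{1,…,N}} √(θ_i² + θ_{-i}²) and all norms are Euclidean. -/

import Mathlib

/-- Under Assumption 2(ii)–(iii), the augmented pseudogradient
`𝐅(x¹,…,x^N)_i = G_i(x^i)` is `θ`-Lipschitz with `θ = max_i √(θ_i² + θ_{-i}²)`. -/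
theorem augmented_pseudogradient_lipschitz
    (N : ℕ) (hN : 0 < N)
    (G : Fin N → EuclideanSpace ℝ (Fin N) → ℝ)
    (θi θmi : Fin N → ℝ) (hθi : ∀ i, 0 ≤ θi i) (hθmi : ∀ i, 0 ≤ θmi i)
    (hA2ii : ∀ (i : Fin N) (x : EuclideanSpace ℝ (Fin N)) (s s' : ℝ),
      |G i (WithLp.toLp 2 (Function.update x i s)) - G i (WithLp.toLp 2 (Function.update x i s'))| ≤ θi i * |s - s'|)
    (hA2iii : ∀ (i : Fin N) (x y : EuclideanSpace ℝ (Fin N)), x i = y i →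
      |G i x - G i y| ≤ θmi i * Real.sqrt (∑ j ∈ Finset.univ.erase i, (x j - y j) ^ 2))
    (θ : ℝ)
    (hθ : IsGreatest (Set.range fun i => Real.sqrt (θi i ^ 2 + θmi i ^ 2)) θ)
    (F : PiLp 2 (fun _ : Fin N => EuclideanSpace ℝ (Fin N)) → EuclideanSpace ℝ (Fin N))
    (hF : ∀ x i, F x i = G i (x i)) :
    ∀ x y : PiLp 2 (fun _ : Fin N => EuclideanSpace ℝ (Fin N)),
      ‖F x - F y‖ ≤ θ * ‖x - y‖ := by
  obtain ⟨i₀, hi₀⟩ := hθ.1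
  have hθ0 : 0 ≤ θ := hi₀ ▸ Real.sqrt_nonneg _
  intro x y
  -- componentwise bound
  have key : ∀ i : Fin N, |G i (x i) - G i (y i)| ≤ θ * ‖x i - y i‖ := by
    intro i
    set u := x i with hu
    set v := y i with hv
    set w : EuclideanSpace ℝ (Fin N) := WithLp.toLp 2 (Function.update u i (v i)) with hw
    have h1 : |G i u - G i w| ≤ θi i * |u i - v i| := by
      have := hA2ii i u (u i) (v i)
      simpa [Function.update_eq_self] using this
    have h2 : |G i w - G i v| ≤
        θmi i * Real.sqrt (∑ j ∈ Finset.univ.erase i, (u j - v j) ^ 2) := by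
      have hwv : w i = v i := Function.update_self _ _ _
      have h := hA2iii i w v hwv
      have hsum : (∑ j ∈ Finset.univ.erase i, (w j - v j) ^ 2)
          = ∑ j ∈ Finset.univ.erase i, (u j - v j) ^ 2 := by
        refine Finset.sum_congr rfl fun j hj => ?_
        have hji : j ≠ i := Finset.ne_of_mem_erase hj
        simp [hw, Function.update_of_ne hji]
      rwa [hsum] at h
    set a := |u i - v i| with ha'
    set b := Real.sqrt (∑ j ∈ Finset.univ.erase i, (u j - v j) ^ 2) with hb'
    have ha : 0 ≤ a := abs_nonneg _
    have hb : 0 ≤ b := Real.sqrt_nonneg _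
    have hab : a ^ 2 + b ^ 2 = ‖u - v‖ ^ 2 := by
      have hn : ‖u - v‖ ^ 2 = ∑ j, (u j - v j) ^ 2 := by
        rw [EuclideanSpace.norm_eq, Real.sq_sqrt (by positivity)]
        refine Finset.sum_congr rfl fun j _ => ?_
        simp [sq_abs]
      rw [hn, ← Finset.add_sum_erase Finset.univ _ (Finset.mem_univ i),
        ha', hb', sq_abs, Real.sq_sqrt (by positivity)]
    have hθle : Real.sqrt (θi i ^ 2 + θmi i ^ 2) ≤ θ := hθ.2 ⟨i, rfl⟩
    have hcs : θi i * a + θmi i * b ≤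
        Real.sqrt (θi i ^ 2 + θmi i ^ 2) * ‖u - v‖ := by
      have hsq : (θi i * a + θmi i * b) ^ 2 ≤
          (θi i ^ 2 + θmi i ^ 2) * (a ^ 2 + b ^ 2) := by
        nlinarith [sq_nonneg (θi i * b - θmi i * a)]
      have h0 : 0 ≤ θi i * a + θmi i * b := add_nonneg (mul_nonneg (hθi i) ha) (mul_nonneg (hθmi i) hb)
      calc θi i * a + θmi i * b
          = Real.sqrt ((θi i * a + θmi i * b) ^ 2) := (Real.sqrt_sq h0).symm
        _ ≤ Real.sqrt ((θi i ^ 2 + θmi i ^ 2) * (a ^ 2 + b ^ 2)) :=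
            Real.sqrt_le_sqrt hsq
        _ = Real.sqrt (θi i ^ 2 + θmi i ^ 2) * Real.sqrt (a ^ 2 + b ^ 2) :=
            Real.sqrt_mul (by positivity) _
        _ = Real.sqrt (θi i ^ 2 + θmi i ^ 2) * ‖u - v‖ := by
            rw [hab, Real.sqrt_sq (norm_nonneg _)]
    calc |G i u - G i v|
        ≤ |G i u - G i w| + |G i w - G i v| := by
          have : G i u - G i v = (G i u - G i w) + (G i w - G i v) := by ring
          rw [this]; exact abs_add_le _ _
      _ ≤ θi i * a + θmi i * b := add_le_add h1 h2
      _ ≤ Real.sqrt (θi i ^ 2 + θmi i ^ 2) * ‖u - v‖ := hcs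
      _ ≤ θ * ‖u - v‖ := mul_le_mul_of_nonneg_right hθle (norm_nonneg _)
  -- assemble
  have hFn : ‖F x - F y‖ ^ 2 ≤ θ ^ 2 * ‖x - y‖ ^ 2 := by
    have h1 : ‖F x - F y‖ ^ 2 = ∑ i, (G i (x i) - G i (y i)) ^ 2 := by
      rw [EuclideanSpace.norm_eq, Real.sq_sqrt (by positivity)]
      refine Finset.sum_congr rfl fun i _ => ?_
      simp [hF, sq_abs]
    have h2 : ‖x - y‖ ^ 2 = ∑ i, ‖x i - y i‖ ^ 2 := by
      rw [PiLp.norm_sq_eq_of_L2]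
      refine Finset.sum_congr rfl fun i _ => ?_
      congr 1
    rw [h1, h2, Finset.mul_sum]
    refine Finset.sum_le_sum fun i _ => ?_
    have := key i
    calc (G i (x i) - G i (y i)) ^ 2 = |G i (x i) - G i (y i)| ^ 2 := (sq_abs _).symm
      _ ≤ (θ * ‖x i - y i‖) ^ 2 := by
          exact pow_le_pow_left₀ (abs_nonneg _) this 2
      _ = θ ^ 2 * ‖x i - y i‖ ^ 2 := by ring
  calc ‖F x - F y‖ = Real.sqrt (‖F x - F y‖ ^ 2) := (Real.sqrt_sq (norm_nonneg _)).symm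
    _ ≤ Real.sqrt (θ ^ 2 * ‖x - y‖ ^ 2) := Real.sqrt_le_sqrt hFn
    _ = θ * ‖x - y‖ := by
        rw [Real.sqrt_mul (by positivity), Real.sqrt_sq hθ0, Real.sqrt_sq (norm_nonneg _)]
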